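/- (Gain estimate, third inequality) Let J ∈ ℝ^{m×n}, L ∈ ℝ^{p×n}, x, x* ∈ ℝⁿ, F, y^δ ∈ ℝ^m, θ > 1, q ∈ (0,1), ζ > 0. Suppose λ satisfies 0 < λ ≤ (q/(1−q))·ζ², that d ∈ ℝⁿ satisfies (JᵀJ + λ LᵀL) d = −Jᵀ(F − y^δ), that ‖F − y^δ + J d‖ = q‖F − y^δ‖, and that ‖F − y^δ + J(x* − x)‖ ≤ (q/θ)‖F − y^δ‖. Set x⁺ := x + d. Then ‖x − x*‖_L² − ‖x⁺ − x*‖_L² ≥ (2(θ−1)(1−q)q/(ζ²θ))·‖F − y^δ‖². -/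

import Mathlib

open Matrix

/-- Euclidean norm of a vector in `ℝ^k`. -/
noncomputable def euclNorm {k : ℕ} (v : Fin k → ℝ) : ℝ :=
  ‖(EuclideanSpace.equiv (Fin k) ℝ).symm v‖

lemma euclNorm_sq {k : ℕ} (v : Fin k → ℝ) : euclNorm v ^ 2 = v ⬝ᵥ v := by
  have h : euclNorm v = Real.sqrt (∑ i, v i ^ 2) := by
    simp [euclNorm, EuclideanSpace.norm_eq]
  rw [h, Real.sq_sqrt (by positivity)]
  simp [dotProduct, pow_two]

lemma euclNorm_nonneg {k : ℕ} (v : Fin k → ℝ) : 0 ≤ euclNorm v := norm_nonneg _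

lemma dot_le_norm {k : ℕ} (u v : Fin k → ℝ) : u ⬝ᵥ v ≤ euclNorm u * euclNorm v := by
  have h := real_inner_le_norm ((EuclideanSpace.equiv (Fin k) ℝ).symm u)
      ((EuclideanSpace.equiv (Fin k) ℝ).symm v)
  have h2 : (inner ℝ ((EuclideanSpace.equiv (Fin k) ℝ).symm u)
      ((EuclideanSpace.equiv (Fin k) ℝ).symm v) : ℝ) = u ⬝ᵥ v := by
    simp [PiLp.inner_apply, dotProduct, mul_comm]
  rw [h2] at h
  exact h

lemma tdot {a b : ℕ} (A : Matrix (Fin a) (Fin b) ℝ) (u : Fin a → ℝ) (v : Fin b → ℝ) :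
    (Aᵀ.mulVec u) ⬝ᵥ v = u ⬝ᵥ (A.mulVec v) := by
  rw [Matrix.dotProduct_mulVec, Matrix.mulVec_transpose]

/-- Gain estimate, third inequality: if additionally `0 < λ ≤ (q/(1−q))ζ²`, then
`‖x − x*‖_L² − ‖x⁺ − x*‖_L² ≥ (2(θ−1)(1−q)q/(ζ²θ))‖F − yδ‖²`. -/
theorem gain_estimate_third (m n p : ℕ)
    (J : Matrix (Fin m) (Fin n) ℝ) (L : Matrix (Fin p) (Fin n) ℝ)
    (x xstar : Fin n → ℝ) (F yδ : Fin m → ℝ)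
    (θ q ζ : ℝ) (hθ : 1 < θ) (hq0 : 0 < q) (hq1 : q < 1) (hζ : 0 < ζ)
    (lam : ℝ) (hlam0 : 0 < lam) (hlam1 : lam ≤ (q / (1 - q)) * ζ ^ 2)
    (d : Fin n → ℝ)
    (hd : (Jᵀ * J + lam • (Lᵀ * L)).mulVec d = -(Jᵀ.mulVec (F - yδ)))
    (hqc : euclNorm (F - yδ + J.mulVec d) = q * euclNorm (F - yδ))
    (hnear : euclNorm (F - yδ + J.mulVec (xstar - x)) ≤ (q / θ) * euclNorm (F - yδ)) :
    euclNorm (L.mulVec (x - xstar)) ^ 2 - euclNorm (L.mulVec (x + d - xstar)) ^ 2 ≥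
      (2 * (θ - 1) * (1 - q) * q / (ζ ^ 2 * θ)) * euclNorm (F - yδ) ^ 2 := by
  have hθ0 : (0:ℝ) < θ := lt_trans one_pos hθ
  set r : Fin m → ℝ := F - yδ with hr
  set e : Fin n → ℝ := xstar - x with he
  set s : Fin m → ℝ := r + J.mulVec d with hs
  set t : Fin m → ℝ := r + J.mulVec e with ht
  set Ld : Fin p → ℝ := L.mulVec d with hLd
  set Le : Fin p → ℝ := L.mulVec e with hLe
  set N : ℝ := euclNorm r with hN
  -- normal equation rearranged
  rw [Matrix.add_mulVec, Matrix.smul_mulVec] at hd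
  have hJs : Jᵀ.mulVec s = (-lam) • ((Lᵀ * L).mulVec d) := by
    have h1 : Jᵀ.mulVec s = Jᵀ.mulVec r + (Jᵀ * J).mulVec d := by
      rw [hs, Matrix.mulVec_add, Matrix.mulVec_mulVec]
    have h2 : (Jᵀ * J).mulVec d = -(Jᵀ.mulVec r) - lam • ((Lᵀ * L).mulVec d) := by
      rw [← hd]; abel
    rw [h1, h2, neg_smul]; abel
  have key : ∀ v : Fin n → ℝ, s ⬝ᵥ J.mulVec v = -(lam * (Ld ⬝ᵥ (L.mulVec v))) := by
    intro v
    rw [← tdot J s v, hJs, smul_dotProduct, ← Matrix.mulVec_mulVec, tdot, hLd,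
      smul_eq_mul]
    ring
  have hkd := key d
  have hke := key e
  -- dot product expansions
  have hsd : s ⬝ᵥ J.mulVec d = s ⬝ᵥ s - s ⬝ᵥ r := by
    rw [hs, dotProduct_add]; ring
  have hse : s ⬝ᵥ J.mulVec e = s ⬝ᵥ t - s ⬝ᵥ r := by
    rw [ht, dotProduct_add]; ring
  have hss : s ⬝ᵥ s = (q * N) ^ 2 := by
    rw [← euclNorm_sq]; rw [hs, hr, hN, hr]; rw [hqc]
  have hsnorm : euclNorm s = q * N := hqc
  have htnorm : euclNorm t ≤ (q / θ) * N := hnear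
  have hN0 : 0 ≤ N := euclNorm_nonneg r
  have hst : s ⬝ᵥ t ≤ (q * N) * ((q / θ) * N) := by
    calc s ⬝ᵥ t ≤ euclNorm s * euclNorm t := dot_le_norm s t
    _ ≤ (q * N) * ((q / θ) * N) := by
        rw [hsnorm]
        exact mul_le_mul_of_nonneg_left htnorm (by positivity)
  have hA0 : 0 ≤ Ld ⬝ᵥ Ld := by rw [← euclNorm_sq]; positivity
  -- lower bound on lam * (2B - A)
  have hlamA : 0 ≤ lam * (Ld ⬝ᵥ Ld) := mul_nonneg hlam0.le hA0
  have hlow : 2 * (q * N) ^ 2 - 2 * ((q * N) * ((q / θ) * N)) ≤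
      lam * (2 * (Ld ⬝ᵥ Le) - Ld ⬝ᵥ Ld) := by
    have e1 : lam * (Ld ⬝ᵥ Le) = (s ⬝ᵥ r) - (s ⬝ᵥ t) := by
      have := hke; rw [hse] at this; linarith
    have e2 : lam * (Ld ⬝ᵥ Ld) = (s ⬝ᵥ r) - (s ⬝ᵥ s) := by
      have := hkd; rw [hsd] at this; linarith
    have e3 : lam * (2 * (Ld ⬝ᵥ Le) - Ld ⬝ᵥ Ld) =
        (s ⬝ᵥ s) + (s ⬝ᵥ r) - 2 * (s ⬝ᵥ t) := by
      have : lam * (2 * (Ld ⬝ᵥ Le) - Ld ⬝ᵥ Ld)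
          = 2 * (lam * (Ld ⬝ᵥ Le)) - lam * (Ld ⬝ᵥ Ld) := by ring
      rw [this, e1, e2]; ring
    have e4 : (s ⬝ᵥ r) = (s ⬝ᵥ s) + lam * (Ld ⬝ᵥ Ld) := by linarith [e2]
    rw [e3, e4, hss]
    linarith [hst, hlamA]
  -- compare with the target constant
  have h1q : (0:ℝ) < 1 - q := by linarith
  have hl : lam * (1 - q) ≤ q * ζ ^ 2 := by
    have := mul_le_mul_of_nonneg_right hlam1 h1q.le
    have heq : q / (1 - q) * ζ ^ 2 * (1 - q) = q * ζ ^ 2 := by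
      field_simp
    linarith [this, heq ▸ this]
  have hK : lam * ((2 * (θ - 1) * (1 - q) * q / (ζ ^ 2 * θ)) * N ^ 2) ≤
      2 * (q * N) ^ 2 - 2 * ((q * N) * ((q / θ) * N)) := by
    have lhs_eq : lam * ((2 * (θ - 1) * (1 - q) * q / (ζ ^ 2 * θ)) * N ^ 2) =
        (lam * (1 - q)) * (2 * (θ - 1) * q * N ^ 2 / (ζ ^ 2 * θ)) := by ring
    have rhs_eq : 2 * (q * N) ^ 2 - 2 * ((q * N) * ((q / θ) * N)) =
        (q * ζ ^ 2) * (2 * (θ - 1) * q * N ^ 2 / (ζ ^ 2 * θ)) := by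
      field_simp
    rw [lhs_eq, rhs_eq]
    have hpos : 0 ≤ 2 * (θ - 1) * q * N ^ 2 / (ζ ^ 2 * θ) := by
      apply div_nonneg
      · nlinarith [sq_nonneg N]
      · positivity
    exact mul_le_mul_of_nonneg_right hl hpos
  have hfin : (2 * (θ - 1) * (1 - q) * q / (ζ ^ 2 * θ)) * N ^ 2 ≤
      2 * (Ld ⬝ᵥ Le) - Ld ⬝ᵥ Ld := by
    have := le_trans hK hlow
    exact le_of_mul_le_mul_left this hlam0
  -- rewrite the goal in terms of A, B, C
  have hg1 : euclNorm (L.mulVec (x - xstar)) ^ 2 = Le ⬝ᵥ Le := by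
    have hxe : x - xstar = -e := by rw [he]; abel
    rw [euclNorm_sq, hxe, Matrix.mulVec_neg]
    simp [hLe]
  have hg2 : euclNorm (L.mulVec (x + d - xstar)) ^ 2 =
      Ld ⬝ᵥ Ld - 2 * (Ld ⬝ᵥ Le) + Le ⬝ᵥ Le := by
    have hxde : x + d - xstar = d - e := by rw [he]; abel
    rw [euclNorm_sq, hxde, Matrix.mulVec_sub]
    rw [sub_dotProduct, dotProduct_sub, dotProduct_sub, ← hLd, ← hLe,
      dotProduct_comm Le Ld]
    ring
  rw [hg1, hg2]
  linarith [hfin]
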